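/- Let (A, ρ, IB) be a local contact algebra. Then the poset of δ-ideals of (A, ρ, IB) ordered by inclusion is a frame. Concretely: (i) the join in the ideal lattice of A of any family of δ-ideals (i.e. the ideal generated by their union) is again a δ-ideal; (ii) the intersection of two δ-ideals is a δ-ideal; and (iii) for any δ-ideal J and any family S of δ-ideals, J ∩ (⋁ S) = ⋁ {J ∩ I | I ∈ S}, where ⋁ denotes the join of ideals. -/

import Mathlib

/-- The axioms (C1)-(C4) of a contact relation on a Boolean algebra. -/
def ContactRel {B : Type*} [BooleanAlgebra B] (C : B → B → Prop) : Prop :=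
  (∀ a : B, a ≠ ⊥ → C a a) ∧
  (∀ a b : B, C a b → a ≠ ⊥ ∧ b ≠ ⊥) ∧
  (∀ a b : B, C a b → C b a) ∧
  (∀ a b c : B, C a (b ⊔ c) ↔ C a b ∨ C a c)

/-- A normal contact algebra: (C1)-(C4) together with (C5) and (C6). -/
def NormalContact {B : Type*} [BooleanAlgebra B] (C : B → B → Prop) : Prop :=
  ContactRel C ∧
  (∀ a b : B, ¬ C a b → ∃ c : B, ¬ C a c ∧ ¬ C b cᶜ) ∧
  (∀ a : B, a ≠ ⊤ → ∃ b : B, b ≠ ⊥ ∧ ¬ C b a)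

/-- A cluster in a contact algebra `(B, C)`: conditions (K1), (K2), (K3). -/
def IsCACluster {B : Type*} [BooleanAlgebra B] (C : B → B → Prop) (σ : Set B) : Prop :=
  σ.Nonempty ∧
  (∀ a ∈ σ, ∀ b ∈ σ, C a b) ∧
  (∀ a b : B, a ⊔ b ∈ σ → a ∈ σ ∨ b ∈ σ) ∧
  (∀ a : B, (∀ b ∈ σ, C a b) → a ∈ σ)

/-- An ideal of a Boolean algebra (nonempty, downward closed, closed under joins). -/
def IsBAIdeal {B : Type*} [BooleanAlgebra B] (I : Set B) : Prop :=
  I.Nonempty ∧ (∀ a ∈ I, ∀ b : B, b ≤ a → b ∈ I) ∧ (∀ a ∈ I, ∀ b ∈ I, a ⊔ b ∈ I)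

/-- A local contact algebra `(B, ρ, IB)`: a contact relation, an ideal of bounded
elements, and the axioms (BC1), (BC2), (BC3).  Here `a ≪ρ b` is `¬ ρ a bᶜ`. -/
def IsLCA {B : Type*} [BooleanAlgebra B] (ρ : B → B → Prop) (IB : Set B) : Prop :=
  ContactRel ρ ∧ IsBAIdeal IB ∧
  (∀ a ∈ IB, ∀ c : B, ¬ ρ a cᶜ → ∃ b ∈ IB, ¬ ρ a bᶜ ∧ ¬ ρ b cᶜ) ∧
  (∀ a b : B, ρ a b → ∃ c ∈ IB, ρ a (c ⊓ b)) ∧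
  (∀ a : B, a ≠ ⊥ → ∃ b ∈ IB, b ≠ ⊥ ∧ ¬ ρ b aᶜ)

/-- The Alexandroff extension `Cρ` of `ρ` relative to the LCA `(B, ρ, IB)`. -/
def AlexExt {B : Type*} [BooleanAlgebra B] (ρ : B → B → Prop) (IB : Set B)
    (a b : B) : Prop :=
  ρ a b ∨ (a ∉ IB ∧ b ∉ IB)

/-- A δ-ideal of an LCA `(B, ρ, IB)`. -/
def IsDeltaIdeal {B : Type*} [BooleanAlgebra B] (ρ : B → B → Prop) (IB I : Set B) : Prop :=
  IsBAIdeal I ∧ I ⊆ IB ∧ ∀ a ∈ I, ∃ b ∈ I, ¬ ρ a bᶜ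

/-- The join, in the ideal lattice of a Boolean algebra, of a family of ideals:
the smallest ideal containing all members of the family (the ideal generated by
their union). -/
def idealJoin {B : Type*} [BooleanAlgebra B] (S : Set (Set B)) : Set B :=
  ⋂₀ {K : Set B | IsBAIdeal K ∧ ∀ I ∈ S, I ⊆ K}


section Aux
variable {A : Type*} [BooleanAlgebra A]

lemma aux_bot_mem {I : Set A} (hI : IsBAIdeal I) : ⊥ ∈ I := by
  obtain ⟨⟨a, ha⟩, hdown, _⟩ := hI
  exact hdown a ha ⊥ bot_le

lemma aux_idealJoin_isIdeal (S : Set (Set A)) : IsBAIdeal (idealJoin S) := by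
  refine ⟨⟨⊥, ?_⟩, ?_, ?_⟩
  · exact fun K hK => aux_bot_mem hK.1
  · exact fun a ha b hb K hK => hK.1.2.1 a (ha K hK) b hb
  · exact fun a ha b hb K hK => hK.1.2.2 a (ha K hK) b (hb K hK)

lemma aux_mem_idealJoin {S : Set (Set A)} {I : Set A} (hI : I ∈ S) {a : A} (ha : a ∈ I) :
    a ∈ idealJoin S := fun K hK => hK.2 I hI ha

lemma aux_idealJoin_subset {S : Set (Set A)} {K : Set A} (hK : IsBAIdeal K)
    (h : ∀ I ∈ S, I ⊆ K) : idealJoin S ⊆ K := fun _ hx => hx K ⟨hK, h⟩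

lemma aux_foldr_const (c : A) (l : List A) :
    l.foldr (· ⊔ ·) c = l.foldr (· ⊔ ·) ⊥ ⊔ c := by
  induction l with
  | nil => simp
  | cons a l ih => simp [List.foldr_cons, ih, sup_assoc]

lemma aux_foldr_mem {I : Set A} (hI : IsBAIdeal I) (l : List A)
    (hl : ∀ x ∈ l, x ∈ I) : l.foldr (· ⊔ ·) ⊥ ∈ I := by
  induction l with
  | nil => exact aux_bot_mem hI
  | cons a l ih =>
      exact hI.2.2 a (hl a (List.mem_cons_self (a := a) (l := l))) _
        (ih fun x hx => hl x (List.mem_cons_of_mem a hx))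

variable {ρ : A → A → Prop} {IB : Set A}

lemma aux_not_rho_mono (h : IsLCA ρ IB) {a b a' b' : A} (ha : a' ≤ a) (hb : b' ≤ b)
    (hn : ¬ ρ a b) : ¬ ρ a' b' := by
  intro hr
  obtain ⟨_, _, hC3, hC4⟩ := h.1
  have h1 : ρ a' b := by
    have := (hC4 a' b' b).mpr (Or.inl hr)
    rwa [sup_eq_right.mpr hb] at this
  have h2 : ρ b a' := hC3 _ _ h1
  have h3 : ρ b a := by
    have := (hC4 b a' a).mpr (Or.inl h2)
    rwa [sup_eq_right.mpr ha] at this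
  exact hn (hC3 _ _ h3)

lemma aux_not_rho_bot (h : IsLCA ρ IB) (b : A) : ¬ ρ ⊥ b :=
  fun hr => (h.1.2.1 _ _ hr).1 rfl

/-- Key step: every finite join of elements of δ-ideals in `S` is well-inside
some element of `idealJoin S`. -/
lemma aux_exists_succ (h : IsLCA ρ IB) {S : Set (Set A)}
    (hS : ∀ I ∈ S, IsDeltaIdeal ρ IB I) (l : List A)
    (hl : ∀ y ∈ l, ∃ I ∈ S, y ∈ I) :
    ∃ b ∈ idealJoin S, ¬ ρ (l.foldr (· ⊔ ·) ⊥) bᶜ := by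
  induction l with
  | nil =>
      exact ⟨⊥, aux_bot_mem (aux_idealJoin_isIdeal S), aux_not_rho_bot h _⟩
  | cons a l ih =>
      obtain ⟨b, hb, hnb⟩ := ih fun y hy => hl y (List.mem_cons_of_mem a hy)
      obtain ⟨I, hIS, haI⟩ := hl a (List.mem_cons_self (a := a) (l := l))
      obtain ⟨c, hcI, hnc⟩ := (hS I hIS).2.2 a haI
      refine ⟨b ⊔ c, (aux_idealJoin_isIdeal S).2.2 b hb c (aux_mem_idealJoin hIS hcI), ?_⟩
      intro hr
      obtain ⟨_, _, hC3, hC4⟩ := h.1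
      have := (hC4 (b ⊔ c)ᶜ a (l.foldr (· ⊔ ·) ⊥)).mp (hC3 _ _ hr)
      rcases this with h1 | h1
      · exact aux_not_rho_mono h le_rfl (by simp) hnc (hC3 _ _ h1)
      · exact aux_not_rho_mono h le_rfl (by simp) hnb (hC3 _ _ h1)

lemma aux_idealJoin_sub_gen {S : Set (Set A)} :
    idealJoin S ⊆ {x : A | ∃ l : List A,
      (∀ y ∈ l, ∃ I ∈ S, y ∈ I) ∧ x ≤ l.foldr (· ⊔ ·) ⊥} := by
  apply aux_idealJoin_subset
  · refine ⟨⟨⊥, ⟨[], by simp⟩⟩, ?_, ?_⟩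
    · rintro a ⟨l, hl, hle⟩ b hb
      exact ⟨l, hl, hb.trans hle⟩
    · rintro a ⟨l₁, hl₁, hle₁⟩ b ⟨l₂, hl₂, hle₂⟩
      refine ⟨l₁ ++ l₂, ?_, ?_⟩
      · intro y hy
        rcases List.mem_append.mp hy with hy | hy
        · exact hl₁ y hy
        · exact hl₂ y hy
      · rw [List.foldr_append, aux_foldr_const]
        exact sup_le_sup hle₁ hle₂
  · intro I hIS x hx
    refine ⟨[x], fun y hy => ⟨I, hIS, ?_⟩, by simp⟩
    · simp only [List.mem_singleton] at hy
      exact hy ▸ hx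

lemma aux_inter_join {J : Set A} (hJ : IsBAIdeal J) {S : Set (Set A)}
    (hS : ∀ I ∈ S, IsBAIdeal I) (l : List A) (hl : ∀ y ∈ l, ∃ I ∈ S, y ∈ I) :
    ∀ a, a ∈ J → a ≤ l.foldr (· ⊔ ·) ⊥ →
      a ∈ idealJoin {K : Set A | ∃ I ∈ S, K = J ∩ I} := by
  set T : Set (Set A) := {K : Set A | ∃ I ∈ S, K = J ∩ I}
  induction l with
  | nil =>
      intro a _ hle
      simp only [List.foldr_nil, le_bot_iff] at hle
      exact hle ▸ aux_bot_mem (aux_idealJoin_isIdeal T)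
  | cons b l ih =>
      intro a haJ hle
      obtain ⟨I, hIS, hbI⟩ := hl b (List.mem_cons_self (a := b) (l := l))
      have h1 : a ⊓ b ∈ idealJoin T :=
        aux_mem_idealJoin (show J ∩ I ∈ T from ⟨I, hIS, rfl⟩)
          ⟨hJ.2.1 a haJ _ inf_le_left, (hS I hIS).2.1 b hbI _ inf_le_right⟩
      have h2 : a ⊓ l.foldr (· ⊔ ·) ⊥ ∈ idealJoin T :=
        ih (fun y hy => hl y (List.mem_cons_of_mem b hy)) _
          (hJ.2.1 a haJ _ inf_le_left) inf_le_right
      have h3 : a ≤ (a ⊓ b) ⊔ (a ⊓ l.foldr (· ⊔ ·) ⊥) := by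
        rw [← inf_sup_left]
        exact le_inf le_rfl hle
      exact (aux_idealJoin_isIdeal T).2.1 _
        ((aux_idealJoin_isIdeal T).2.2 _ h1 _ h2) a h3

end Aux

/-- The poset of δ-ideals of an LCA (A, ρ, IB) is a frame: (i) the join (in the
ideal lattice) of any family of δ-ideals is a δ-ideal; (ii) the intersection of
two δ-ideals is a δ-ideal; (iii) binary meets distribute over arbitrary joins. -/
theorem stmt_8 {A : Type*} [BooleanAlgebra A]
    (ρ : A → A → Prop) (IB : Set A) (h : IsLCA ρ IB) :
    (∀ S : Set (Set A), (∀ I ∈ S, IsDeltaIdeal ρ IB I) →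
      IsDeltaIdeal ρ IB (idealJoin S)) ∧
    (∀ I J : Set A, IsDeltaIdeal ρ IB I → IsDeltaIdeal ρ IB J →
      IsDeltaIdeal ρ IB (I ∩ J)) ∧
    (∀ J : Set A, IsDeltaIdeal ρ IB J → ∀ S : Set (Set A),
      (∀ I ∈ S, IsDeltaIdeal ρ IB I) →
      J ∩ idealJoin S = idealJoin {K : Set A | ∃ I ∈ S, K = J ∩ I}) := by
  have hC := h.1
  have hIB := h.2.1
  refine ⟨?_, ?_, ?_⟩
  · -- (i)
    intro S hS
    refine ⟨aux_idealJoin_isIdeal S, aux_idealJoin_subset hIB (fun I hI => (hS I hI).2.1), ?_⟩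
    intro a ha
    obtain ⟨l, hl, hle⟩ := aux_idealJoin_sub_gen ha
    obtain ⟨b, hb, hnb⟩ := aux_exists_succ h hS l hl
    exact ⟨b, hb, aux_not_rho_mono h hle le_rfl hnb⟩
  · -- (ii)
    intro I J hI hJ
    refine ⟨⟨⟨⊥, aux_bot_mem hI.1, aux_bot_mem hJ.1⟩, ?_, ?_⟩,
      fun x hx => hI.2.1 hx.1, ?_⟩
    · exact fun a ha b hb => ⟨hI.1.2.1 a ha.1 b hb, hJ.1.2.1 a ha.2 b hb⟩
    · exact fun a ha b hb => ⟨hI.1.2.2 a ha.1 b hb.1, hJ.1.2.2 a ha.2 b hb.2⟩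
    · intro a ha
      obtain ⟨b, hbI, hnb⟩ := hI.2.2 a ha.1
      obtain ⟨c, hcJ, hnc⟩ := hJ.2.2 a ha.2
      refine ⟨b ⊓ c, ⟨hI.1.2.1 b hbI _ inf_le_left, hJ.1.2.1 c hcJ _ inf_le_right⟩, ?_⟩
      intro hr
      rw [compl_inf] at hr
      rcases (hC.2.2.2 a bᶜ cᶜ).mp hr with h1 | h1
      · exact hnb h1
      · exact hnc h1
  · -- (iii)
    intro J hJ S hS
    apply Set.Subset.antisymm
    · rintro a ⟨haJ, haS⟩
      obtain ⟨l, hl, hle⟩ := aux_idealJoin_sub_gen haS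
      exact aux_inter_join hJ.1 (fun I hI => (hS I hI).1) l hl a haJ hle
    · apply aux_idealJoin_subset
      · refine ⟨⟨⊥, aux_bot_mem hJ.1, aux_bot_mem (aux_idealJoin_isIdeal S)⟩, ?_, ?_⟩
        · exact fun a ha b hb => ⟨hJ.1.2.1 a ha.1 b hb,
            (aux_idealJoin_isIdeal S).2.1 a ha.2 b hb⟩
        · exact fun a ha b hb => ⟨hJ.1.2.2 a ha.1 b hb.1,
            (aux_idealJoin_isIdeal S).2.2 a ha.2 b hb.2⟩
      · rintro K ⟨I, hIS, rfl⟩ x hx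
        exact ⟨hx.1, aux_mem_idealJoin hIS hx.2⟩
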